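/- Let N ∈ ℤ_{≥0} and suppose nb + λ + N − 1 = 0. Then for every m̄ ∈ ℤ_{≥0}^{n+1}, the column vector X ∈ R^{n+1} with entries X_j := a_j^{−1}·(m_j+1)·σ_j^{−1}(P_{m̄+ε_j}(S,a)) for 1 ≤ j ≤ n+1 satisfies A(λ,b,S,N)·X = 0, i.e. ∑_{j=1}^{n+1} A_{ij}·X_j = 0 in R for every 1 ≤ i ≤ n+1. -/

import Mathlib

open MvPolynomial

/-- The generators `h_1, …, h_n` of `R = ℂ[h_1,…,h_n]`, together with
`h_{n+1} := -(h_1 + ⋯ + h_n)`.  Indices: `i : Fin (n+1)` with `(i : ℕ) < n`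
corresponding to `h_1, …, h_n` and `i = Fin.last n` to `h_{n+1}`. -/
noncomputable def Hp (n : ℕ) (i : Fin (n + 1)) : MvPolynomial (Fin n) ℂ :=
  if h : (i : ℕ) < n then X ⟨i, h⟩ else -∑ j : Fin n, X j

/-- The automorphism `σ_i` of `R` determined by `σ_i(h_k) = h_k - δ_{k,i}` for `1 ≤ i ≤ n`,
and `σ_{n+1} = id`. -/
noncomputable def sigma (n : ℕ) (i : Fin (n + 1)) :
    MvPolynomial (Fin n) ℂ ≃ₐ[ℂ] MvPolynomial (Fin n) ℂ :=
  if h : (i : ℕ) < n then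
    AlgEquiv.ofAlgHom
      (aeval fun k => X k - if k = ⟨i, h⟩ then 1 else 0)
      (aeval fun k => X k + if k = ⟨i, h⟩ then 1 else 0)
      (by ext k : 1; by_cases hk : k = ⟨i, h⟩ <;> simp [hk])
      (by ext k : 1; by_cases hk : k = ⟨i, h⟩ <;> simp [hk])
  else AlgEquiv.refl

/-- The scalar `a^{m̄}/m̄!`. -/
noncomputable def coef (n : ℕ) (a : Fin (n + 1) → ℂ) (m : Fin (n + 1) → ℕ) : ℂ :=
  (∏ j, a j ^ m j) / ((∏ j, (m j).factorial : ℕ) : ℂ)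

/-- `P_{m̄}(S,a) = (a^{m̄}/m̄!) ∏_{s ∉ S} ∏_{k=1}^{m_s} (h_s - b - k)`. -/
noncomputable def Pm (n : ℕ) (b : ℂ) (S : Finset (Fin (n + 1))) (a : Fin (n + 1) → ℂ)
    (m : Fin (n + 1) → ℕ) : MvPolynomial (Fin n) ℂ :=
  coef n a m • ∏ s ∈ Sᶜ, ∏ k ∈ Finset.range (m s), (Hp n s - C (b + k + 1))

/-- `P'_{m̄}(S,a) = (a^{m̄}/m̄!) ∏_{s∉S, s≠n+1} ∏_{k=1}^{m_s}(h_s - b - k) ⋅ C ⋅`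
`∏_{t=1}^{m_{n+1}}(h_{n+1} + nb - t + 1)`, where
`C = ∏_{r=1}^{N-m_{n+1}}(h_{n+1} - b - 1 + r)` if `n+1 ∈ S` and `C = 1` otherwise. -/
noncomputable def P' (n : ℕ) (b : ℂ) (S : Finset (Fin (n + 1))) (a : Fin (n + 1) → ℂ)
    (N : ℕ) (m : Fin (n + 1) → ℕ) : MvPolynomial (Fin n) ℂ :=
  coef n a m •
    ((∏ s ∈ Sᶜ.erase (Fin.last n), ∏ k ∈ Finset.range (m s), (Hp n s - C (b + k + 1)))
      * (if Fin.last n ∈ S then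
            ∏ r ∈ Finset.range (N - m (Fin.last n)), (Hp n (Fin.last n) - C (b - r))
          else 1)
      * ∏ t ∈ Finset.range (m (Fin.last n)), (Hp n (Fin.last n) + C ((n : ℂ) * b - t)))

/-- `Δ_{m̄}(S,a) = (a^{m̄}/m̄!) ∏_{s∉S} ∏_{k=1}^{m_s}(h_s - b - k) ⋅`
`∏_{r=2}^{N-m_{n+1}}(h_{n+1} - b - 2 + r) ⋅ ∏_{t=1}^{m_{n+1}}(h_{n+1} + nb - t)`. -/
noncomputable def Δm (n : ℕ) (b : ℂ) (S : Finset (Fin (n + 1))) (a : Fin (n + 1) → ℂ)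
    (N : ℕ) (m : Fin (n + 1) → ℕ) : MvPolynomial (Fin n) ℂ :=
  coef n a m •
    ((∏ s ∈ Sᶜ, ∏ k ∈ Finset.range (m s), (Hp n s - C (b + k + 1)))
      * (∏ r ∈ Finset.range (N - m (Fin.last n) - 1), (Hp n (Fin.last n) - C (b - r)))
      * ∏ t ∈ Finset.range (m (Fin.last n)), (Hp n (Fin.last n) + C ((n : ℂ) * b - t - 1)))

/-- `Θ_{m̄}(S,a) = (a^{m̄}/m̄!) ∏_{s∉S, s≠n+1} ∏_{k=1}^{m_s}(h_s - b - k) ⋅`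
`∏_{k=1}^{m_{n+1}}(h_{n+1} - b - k - 1)`. -/
noncomputable def Θm (n : ℕ) (b : ℂ) (S : Finset (Fin (n + 1))) (a : Fin (n + 1) → ℂ)
    (m : Fin (n + 1) → ℕ) : MvPolynomial (Fin n) ℂ :=
  coef n a m •
    ((∏ s ∈ Sᶜ.erase (Fin.last n), ∏ k ∈ Finset.range (m s), (Hp n s - C (b + k + 1)))
      * ∏ k ∈ Finset.range (m (Fin.last n)), (Hp n (Fin.last n) - C (b + k + 2)))

/-- `Υ_{m̄}(S,a) = (a^{m̄}/m̄!) ∏_{s∉S, s≠n+1} ∏_{k=1}^{m_s}(h_s - b - k) ⋅`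
`∏_{t=1}^{m_{n+1}}(h_{n+1} + nb - t)`. -/
noncomputable def Υm (n : ℕ) (b : ℂ) (S : Finset (Fin (n + 1))) (a : Fin (n + 1) → ℂ)
    (m : Fin (n + 1) → ℕ) : MvPolynomial (Fin n) ℂ :=
  coef n a m •
    ((∏ s ∈ Sᶜ.erase (Fin.last n), ∏ k ∈ Finset.range (m s), (Hp n s - C (b + k + 1)))
      * ∏ t ∈ Finset.range (m (Fin.last n)), (Hp n (Fin.last n) + C ((n : ℂ) * b - t - 1)))

/-- `h̄_i = h_i - δ_{i,n+1}`. -/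
noncomputable def Hbar (n : ℕ) (i : Fin (n + 1)) : MvPolynomial (Fin n) ℂ :=
  Hp n i - if i = Fin.last n then 1 else 0

/-- The `(n+1) × (n+1)` matrix `A(λ,b,S,N)` with entries in `R`:
`A_{ii} = h̄_i - λ - N + 2` and, for `i ≠ j`,
`A_{ij} = (δ_{i∈S} + δ_{i∉S}(h̄_i - b)) (δ_{j∈S}(h̄_j - b) + δ_{j∉S})`. -/
noncomputable def Amat (n : ℕ) (lam b : ℂ) (S : Finset (Fin (n + 1))) (N : ℕ) :
    Matrix (Fin (n + 1)) (Fin (n + 1)) (MvPolynomial (Fin n) ℂ) :=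
  fun i j =>
    if i = j then Hbar n i - C (lam + N - 2)
    else (if i ∈ S then 1 else Hbar n i - C b) * (if j ∈ S then Hbar n j - C b else 1)

/-! ### Auxiliary lemmas for `statement17` -/

lemma sigma_apply_Hp (n : ℕ) (j s : Fin (n + 1)) :
    sigma n j (Hp n s) =
      Hp n s - (if s = j then 1 else 0) + (if s = Fin.last n then 1 else 0) := by
  unfold sigma Hp
  by_cases hj : (j : ℕ) < n
  · rw [dif_pos hj]
    have hjlast : j ≠ Fin.last n := by
      intro hc; rw [hc] at hj; simp at hj
    by_cases hs : (s : ℕ) < n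
    · rw [dif_pos hs]
      have hslast : s ≠ Fin.last n := by
        intro hc; rw [hc] at hs; simp at hs
      have hmk : ((⟨(s : ℕ), hs⟩ : Fin n) = ⟨(j : ℕ), hj⟩) ↔ s = j := by
        simp [Fin.ext_iff]
      simp only [AlgEquiv.ofAlgHom_apply, aeval_X, if_neg hslast]
      by_cases hsj : s = j
      · rw [if_pos (hmk.mpr hsj), if_pos hsj]; ring
      · rw [if_neg (fun hc => hsj (hmk.mp hc)), if_neg hsj]; ring
    · have hslast : s = Fin.last n := by
        apply Fin.ext; simp only [Fin.val_last]; omega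
      have hsj : s ≠ j := by rw [hslast]; exact fun hc => hjlast hc.symm
      rw [dif_neg hs]
      simp only [AlgEquiv.ofAlgHom_apply, map_neg, map_sum, aeval_X,
        if_neg hsj, if_pos hslast]
      rw [Finset.sum_sub_distrib]
      rw [Finset.sum_ite_eq' Finset.univ (⟨(j : ℕ), hj⟩ : Fin n) (fun _ => (1 : MvPolynomial (Fin n) ℂ))]
      simp only [Finset.mem_univ, if_pos]
      ring
  · rw [dif_neg hj]
    have hjlast : j = Fin.last n := by
      apply Fin.ext; simp only [Fin.val_last]; omega
    rw [hjlast]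
    simp only [AlgEquiv.coe_refl, id_eq]
    by_cases hsl : s = Fin.last n
    · rw [if_pos hsl]; ring
    · rw [if_neg hsl]; ring

lemma sigma_symm_Hp (n : ℕ) (j s : Fin (n + 1)) :
    (sigma n j).symm (Hp n s) =
      Hp n s + (if s = j then 1 else 0) - (if s = Fin.last n then 1 else 0) := by
  rw [AlgEquiv.symm_apply_eq, map_sub, map_add, sigma_apply_Hp]
  simp only [apply_ite (sigma n j), map_one, map_zero]
  ring

lemma sigma_symm_C (n : ℕ) (j : Fin (n + 1)) (c : ℂ) :
    (sigma n j).symm (C c) = C c := by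
  have := (sigma n j).symm.commutes c
  simpa [MvPolynomial.algebraMap_eq] using this

lemma coef_step (n : ℕ) (a : Fin (n + 1) → ℂ) (ha : ∀ j, a j ≠ 0)
    (m : Fin (n + 1) → ℕ) (j : Fin (n + 1)) :
    (a j)⁻¹ * ((m j : ℂ) + 1) * coef n a (fun l => m l + if l = j then 1 else 0)
      = coef n a m := by
  unfold coef
  have h1 : (∏ l, a l ^ (m l + if l = j then 1 else 0)) = (∏ l, a l ^ m l) * a j := by
    rw [← Finset.mul_prod_erase Finset.univ _ (Finset.mem_univ j),
        ← Finset.mul_prod_erase Finset.univ (fun l => a l ^ m l) (Finset.mem_univ j),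
        Finset.prod_congr rfl
          (fun l hl => by rw [if_neg (Finset.ne_of_mem_erase hl), add_zero]),
        if_pos rfl, pow_succ]
    ring
  have h2 : (∏ l, (m l + if l = j then 1 else 0).factorial)
      = (m j + 1) * ∏ l, (m l).factorial := by
    rw [← Finset.mul_prod_erase Finset.univ _ (Finset.mem_univ j),
        ← Finset.mul_prod_erase Finset.univ (fun l => (m l).factorial) (Finset.mem_univ j)]
    rw [Finset.prod_congr rfl
      (fun l hl => by rw [if_neg (Finset.ne_of_mem_erase hl), add_zero])]
    rw [if_pos rfl, Nat.factorial_succ]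
    ring
  have haj := ha j
  rw [h1, h2]
  have hfac : ((∏ l, (m l).factorial : ℕ) : ℂ) ≠ 0 := by
    exact_mod_cast (Finset.prod_pos (fun l _ => Nat.factorial_pos (m l))).ne'
  have hm1 : ((m j : ℂ) + 1) ≠ 0 := by
    exact_mod_cast (Nat.succ_ne_zero (m j))
  rw [Nat.cast_mul, Nat.cast_add, Nat.cast_one, mul_div_mul_comm]
  push_cast at hfac ⊢
  field_simp

lemma sum_Hp (n : ℕ) : ∑ j, Hp n j = 0 := by
  rw [Fin.sum_univ_castSucc]
  have h1 : ∀ i : Fin n, Hp n (Fin.castSucc i) = X i := by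
    intro i
    unfold Hp
    rw [dif_pos (by simpa using i.isLt)]
    exact congrArg X (Fin.ext (by simp))
  have h2 : Hp n (Fin.last n) = -∑ j : Fin n, X j := by
    unfold Hp
    rw [dif_neg (by simp)]
  rw [h2, Finset.sum_congr rfl (fun i _ => h1 i)]
  ring

lemma sum_Hbar (n : ℕ) : ∑ j, Hbar n j = -1 := by
  unfold Hbar
  rw [Finset.sum_sub_distrib, sum_Hp,
    Finset.sum_ite_eq' Finset.univ (Fin.last n) (fun _ => (1 : MvPolynomial (Fin n) ℂ))]
  simp

lemma sum_AU (n : ℕ) (lam b : ℂ) (S : Finset (Fin (n + 1))) (N : ℕ)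
    (h : (n : ℂ) * b + lam + N - 1 = 0) (i : Fin (n + 1)) :
    ∑ j, Amat n lam b S N i j * (if j ∈ S then 1 else Hbar n j - C b) = 0 := by
  have h' : (n : MvPolynomial (Fin n) ℂ) * C b + C lam + (N : MvPolynomial (Fin n) ℂ) - 1 = 0 := by
    have := congrArg (C : ℂ → MvPolynomial (Fin n) ℂ) h
    simpa [map_sub, map_add, map_mul, map_one, map_natCast] using this
  rw [← Finset.add_sum_erase _ _ (Finset.mem_univ i)]
  have h2 : ∑ j ∈ Finset.univ.erase i,
      Amat n lam b S N i j * (if j ∈ S then 1 else Hbar n j - C b)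
      = (if i ∈ S then 1 else Hbar n i - C b) *
          ∑ j ∈ Finset.univ.erase i, (Hbar n j - C b) := by
    rw [Finset.mul_sum]
    refine Finset.sum_congr rfl fun j hj => ?_
    have hji : ¬ i = j := fun hc => (Finset.ne_of_mem_erase hj) hc.symm
    by_cases hi : i ∈ S <;> by_cases hj' : j ∈ S <;>
      simp only [Amat, if_neg hji, if_pos, if_neg, hi, hj', if_true, if_false] <;> ring
  rw [h2, Finset.sum_erase_eq_sub (Finset.mem_univ i), Finset.sum_sub_distrib, sum_Hbar,
    Finset.sum_const, Finset.card_univ, Fintype.card_fin]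
  simp only [Amat, if_pos rfl]
  simp only [nsmul_eq_mul, map_sub, map_add, map_natCast, map_one, map_ofNat]
  by_cases hi : i ∈ S
  · simp only [hi, if_true]; push_cast; linear_combination -h'
  · simp only [hi, if_false]; push_cast; linear_combination -(Hbar n i - C b) * h'

lemma prod_G (n : ℕ) (b : ℂ) (S : Finset (Fin (n + 1))) (m : Fin (n + 1) → ℕ)
    (j : Fin (n + 1)) :
    (∏ s ∈ Sᶜ, ∏ k ∈ Finset.range (m s + if s = j then 1 else 0),
        (Hp n s + (if s = j then 1 else 0) - (if s = Fin.last n then 1 else 0)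
          - C (b + k + 1)))
    = (if j ∈ S then 1 else Hbar n j - C b) *
      ((∏ s ∈ Sᶜ.erase (Fin.last n), ∏ k ∈ Finset.range (m s), (Hp n s - C (b + k + 1))) *
       (if Fin.last n ∈ S then 1
        else ∏ k ∈ Finset.range (m (Fin.last n)), (Hp n (Fin.last n) - C (b + k + 2)))) := by
  set G : Fin (n + 1) → MvPolynomial (Fin n) ℂ := fun s =>
    ∏ k ∈ Finset.range (m s + if s = j then 1 else 0),
      (Hp n s + (if s = j then 1 else 0) - (if s = Fin.last n then 1 else 0)
        - C (b + k + 1)) with hG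
  have hsplit : ∏ s ∈ Sᶜ, G s
      = (∏ s ∈ Sᶜ.erase (Fin.last n), G s) *
          (if Fin.last n ∈ S then 1 else G (Fin.last n)) := by
    by_cases hl : Fin.last n ∈ S
    · rw [if_pos hl, Finset.erase_eq_of_notMem
        (show Fin.last n ∉ Sᶜ by simp [hl]), mul_one]
    · rw [if_neg hl, ← Finset.mul_prod_erase Sᶜ G
        (show Fin.last n ∈ Sᶜ from Finset.mem_compl.mpr hl), mul_comm]
  have hF : ∀ s ∈ Sᶜ.erase (Fin.last n), s ≠ j →
      G s = ∏ k ∈ Finset.range (m s), (Hp n s - C (b + k + 1)) := by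
    intro s hs hsj
    have hsl : s ≠ Fin.last n := Finset.ne_of_mem_erase hs
    rw [hG]
    simp only [if_neg hsj, if_neg hsl, add_zero, sub_zero]
  have hGlast : Fin.last n ∉ S → j ≠ Fin.last n →
      G (Fin.last n)
        = ∏ k ∈ Finset.range (m (Fin.last n)), (Hp n (Fin.last n) - C (b + k + 2)) := by
    intro _ hjl
    rw [hG]
    simp only [if_neg (Ne.symm hjl), eq_self_iff_true, if_true, add_zero]
    refine Finset.prod_congr rfl fun k _ => ?_
    simp only [map_add, map_one, map_natCast, map_ofNat]
    ring
  rw [hsplit]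
  by_cases hjl : j = Fin.last n
  · -- j is the last index
    have hA : ∏ s ∈ Sᶜ.erase (Fin.last n), G s
        = ∏ s ∈ Sᶜ.erase (Fin.last n), ∏ k ∈ Finset.range (m s), (Hp n s - C (b + k + 1)) :=
      Finset.prod_congr rfl fun s hs =>
        hF s hs (by rw [hjl]; exact Finset.ne_of_mem_erase hs)
    by_cases hl : Fin.last n ∈ S
    · have hjS : j ∈ S := by rw [hjl]; exact hl
      rw [hA]
      simp only [if_pos hl, if_pos hjS, one_mul, mul_one]
    · have hGl : G (Fin.last n)
          = (∏ k ∈ Finset.range (m (Fin.last n)), (Hp n (Fin.last n) - C (b + k + 2)))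
            * (Hbar n (Fin.last n) - C b) := by
        rw [hG]
        simp only [if_pos hjl.symm, eq_self_iff_true, if_true]
        rw [Finset.prod_range_succ']
        congr 1
        · refine Finset.prod_congr rfl fun k _ => ?_
          simp only [Nat.cast_add, Nat.cast_one, map_add, map_one, map_natCast, map_ofNat]
          ring
        · unfold Hbar
          simp only [eq_self_iff_true, if_true, Nat.cast_zero, map_add, map_one, map_zero]
          ring
      rw [hA]
      simp only [if_neg hl, if_neg (show j ∉ S from fun hc => hl (hjl ▸ hc))]
      rw [hGl, hjl]
      ring
  · -- j is not the last index
    have hBlast : (if Fin.last n ∈ S then 1 else G (Fin.last n))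
        = (if Fin.last n ∈ S then 1
            else ∏ k ∈ Finset.range (m (Fin.last n)), (Hp n (Fin.last n) - C (b + k + 2))) := by
      by_cases hl : Fin.last n ∈ S
      · simp only [if_pos hl]
      · simp only [if_neg hl]
        exact hGlast hl hjl
    rw [hBlast]
    by_cases hjS : j ∈ S
    · have hA : ∏ s ∈ Sᶜ.erase (Fin.last n), G s
          = ∏ s ∈ Sᶜ.erase (Fin.last n), ∏ k ∈ Finset.range (m s), (Hp n s - C (b + k + 1)) :=
        Finset.prod_congr rfl fun s hs =>
          hF s hs (fun hc => (Finset.mem_compl.mp (Finset.mem_of_mem_erase hs)) (hc ▸ hjS))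
      rw [hA, if_pos hjS, one_mul]
    · -- j ∉ S and j ≠ last
      have hjmem : j ∈ Sᶜ.erase (Fin.last n) :=
        Finset.mem_erase.mpr ⟨hjl, Finset.mem_compl.mpr hjS⟩
      have hGj : G j = (Hbar n j - C b) * ∏ k ∈ Finset.range (m j), (Hp n j - C (b + k + 1)) := by
        rw [hG]
        simp only [eq_self_iff_true, if_true, if_neg hjl]
        rw [Finset.prod_range_succ', mul_comm]
        congr 1
        · unfold Hbar
          simp only [if_neg hjl, Nat.cast_zero, map_add, map_one, map_zero]
          ring
        · refine Finset.prod_congr rfl fun k _ => ?_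
          simp only [Nat.cast_add, Nat.cast_one, map_add, map_one, map_natCast, map_ofNat]
          ring
      rw [← Finset.mul_prod_erase _ G hjmem, hGj,
          Finset.prod_congr rfl (fun s hs => hF s (Finset.mem_of_mem_erase hs)
            (Finset.ne_of_mem_erase hs)),
          if_neg hjS,
          ← Finset.mul_prod_erase (Sᶜ.erase (Fin.last n))
            (fun s => ∏ k ∈ Finset.range (m s), (Hp n s - C (b + ↑k + 1))) hjmem]
      ring

lemma keyX (n : ℕ) (b : ℂ) (S : Finset (Fin (n + 1))) (a : Fin (n + 1) → ℂ)
    (ha : ∀ j, a j ≠ 0) (m : Fin (n + 1) → ℕ) (j : Fin (n + 1)) :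
    ((a j)⁻¹ * ((m j : ℂ) + 1)) •
        (sigma n j).symm (Pm n b S a (fun l => m l + if l = j then 1 else 0))
      = (if j ∈ S then 1 else Hbar n j - C b) *
        (coef n a m •
          ((∏ s ∈ Sᶜ.erase (Fin.last n), ∏ k ∈ Finset.range (m s), (Hp n s - C (b + k + 1))) *
           (if Fin.last n ∈ S then 1
            else ∏ k ∈ Finset.range (m (Fin.last n)), (Hp n (Fin.last n) - C (b + k + 2))))) := by
  unfold Pm
  rw [map_smul, smul_smul, coef_step n a ha m j, map_prod]
  have hin : ∀ s, (sigma n j).symm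
        (∏ k ∈ Finset.range ((fun l => m l + if l = j then 1 else 0) s),
          (Hp n s - C (b + ↑k + 1)))
      = ∏ k ∈ Finset.range (m s + if s = j then 1 else 0),
          (Hp n s + (if s = j then 1 else 0) - (if s = Fin.last n then 1 else 0)
            - C (b + ↑k + 1)) := by
    intro s
    rw [map_prod]
    exact Finset.prod_congr rfl fun k _ => by rw [map_sub, sigma_symm_Hp, sigma_symm_C]
  rw [Finset.prod_congr rfl fun s _ => hin s, prod_G n b S m j, mul_smul_comm]


/-- Lemma: if `nb + λ + N - 1 = 0` then, for every `m̄`, the vector with entries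
`X_j = a_j⁻¹ (m_j+1) σ_j⁻¹(P_{m̄+ε_j}(S,a))` satisfies `A(λ,b,S,N) X = 0`. -/
theorem statement17 (n : ℕ) (hn : 1 ≤ n) (lam b : ℂ) (S : Finset (Fin (n + 1)))
    (a : Fin (n + 1) → ℂ) (ha : ∀ j, a j ≠ 0) (halast : a (Fin.last n) = 1)
    (N : ℕ) (h : (n : ℂ) * b + lam + N - 1 = 0) (m : Fin (n + 1) → ℕ) (i : Fin (n + 1)) :
    ∑ j, Amat n lam b S N i j *
        ((a j)⁻¹ * (m j + 1 : ℂ)) •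
          (sigma n j).symm (Pm n b S a (fun l => m l + if l = j then 1 else 0))
      = 0 := by
  have hsum : ∑ j, Amat n lam b S N i j *
      (((a j)⁻¹ * ((m j : ℂ) + 1)) •
        (sigma n j).symm (Pm n b S a (fun l => m l + if l = j then 1 else 0)))
      = ∑ j, (Amat n lam b S N i j * (if j ∈ S then 1 else Hbar n j - C b)) *
          (coef n a m •
            ((∏ s ∈ Sᶜ.erase (Fin.last n), ∏ k ∈ Finset.range (m s), (Hp n s - C (b + k + 1))) *
             (if Fin.last n ∈ S then 1
              else ∏ k ∈ Finset.range (m (Fin.last n)), (Hp n (Fin.last n) - C (b + k + 2))))) := by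
    refine Finset.sum_congr rfl fun j _ => ?_
    rw [keyX n b S a ha m j, mul_assoc]
  rw [hsum, ← Finset.sum_mul, sum_AU n lam b S N h i, zero_mul]
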